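/- For even n ≥ 2 and 0 ≤ k ≤ n − 1, the minimum number of edges of a graph on n vertices with matching preclusion number exactly k equals nk/2. -/

import Mathlib

open SimpleGraph

/-- An almost-perfect matching: a matching covering all vertices except exactly one. -/
def SimpleGraph.Subgraph.IsAlmostPerfectMatching {V : Type*} {G : SimpleGraph V}
    (M : G.Subgraph) : Prop :=
  M.IsMatching ∧ ∃ v : V, M.verts = {v}ᶜ

/-- `G` has a perfect matching or an almost-perfect matching. -/
def SimpleGraph.HasGoodMatching {V : Type*} (G : SimpleGraph V) : Prop :=
  (∃ M : G.Subgraph, M.IsPerfectMatching) ∨ (∃ M : G.Subgraph, M.IsAlmostPerfectMatching)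

/-- The matching preclusion number of `G`. -/
noncomputable def SimpleGraph.mp {V : Type*} [Fintype V] (G : SimpleGraph V) : ℕ :=
  sInf { k | ∃ F : Finset (Sym2 V), ↑F ⊆ G.edgeSet ∧ F.card = k ∧
    ¬ (G.deleteEdges ↑F).HasGoodMatching }
lemma isolated_no_good {n : ℕ} (hn : Even n) (h2 : 2 ≤ n)
    (H : SimpleGraph (Fin n)) (v : Fin n) (hv : ∀ w, ¬ H.Adj v w) :
    ¬ H.HasGoodMatching := by
  rintro (⟨M, hM⟩ | ⟨M, hMm, u, hu⟩)
  · obtain ⟨w, hw, -⟩ := hM.1 (hM.2 v)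
    exact hv w (M.adj_sub hw)
  · by_cases huv : u = v
    · subst huv
      classical
      haveI : Fintype ↥M.verts := Fintype.ofFinite _
      have hcard : M.verts.toFinset.card = n - 1 := by
        simp [hu, Set.toFinset_compl, Finset.card_compl]
      have := hMm.even_card
      rw [hcard] at this
      obtain ⟨t, ht⟩ := hn
      obtain ⟨s, hs⟩ := this
      omega
    · have hvM : v ∈ M.verts := by rw [hu]; simp [Ne.symm huv]
      obtain ⟨w, hw, -⟩ := hMm hvM
      exact hv w (M.adj_sub hw)

lemma lower_bound {n k : ℕ} (hn : Even n) (h2 : 2 ≤ n) (G : SimpleGraph (Fin n))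
    (hmp : G.mp = k) : n * k / 2 ≤ G.edgeSet.ncard := by
  classical
  have hdeg : ∀ v, k ≤ G.degree v := by
    intro v
    by_contra hlt
    push_neg at hlt
    have hmem : G.degree v ∈ { j | ∃ F : Finset (Sym2 (Fin n)), ↑F ⊆ G.edgeSet ∧ F.card = j ∧
        ¬ (G.deleteEdges ↑F).HasGoodMatching } := by
      refine ⟨G.incidenceFinset v, ?_, ?_, ?_⟩
      · intro e he
        simp only [Finset.coe_sort_coe, Finset.mem_coe, mem_incidenceFinset] at he
        exact he.1
      · exact G.card_incidenceFinset_eq_degree v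
      · refine isolated_no_good hn h2 _ v ?_
        intro w hw
        rw [deleteEdges_adj] at hw
        refine hw.2 ?_
        simp only [Finset.mem_coe, mem_incidenceFinset]
        exact ⟨hw.1, Sym2.mem_mk_left v w⟩
    have hle : G.mp ≤ G.degree v := Nat.sInf_le hmem
    omega
  have hsum := G.sum_degrees_eq_twice_card_edges
  have hnk : n * k ≤ ∑ v, G.degree v := by
    calc n * k = ∑ _v : Fin n, k := by simp [mul_comm]
    _ ≤ _ := Finset.sum_le_sum (fun v _ => hdeg v)
  have hE : G.edgeSet.ncard = G.edgeFinset.card := by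
    rw [← coe_edgeFinset, Set.ncard_coe_finset]
  omega
lemma two_mul_cancel {m : ℕ} (hm : Odd m) {a b : ZMod m} (h : 2 * a = 2 * b) : a = b := by
  have e : ((m + 1) / 2) * 2 = m + 1 := by obtain ⟨t, ht⟩ := hm; omega
  have h1 : (((m + 1) / 2 : ℕ) : ZMod m) * 2 = 1 := by
    calc (((m + 1) / 2 : ℕ) : ZMod m) * 2 = (((m + 1) / 2 * 2 : ℕ) : ZMod m) := by push_cast; ring
    _ = ((m + 1 : ℕ) : ZMod m) := by rw [e]
    _ = 1 := by push_cast [ZMod.natCast_self]; ring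
  calc a = 1 * a := (one_mul a).symm
  _ = (((m + 1) / 2 : ℕ) : ZMod m) * (2 * a) := by rw [← h1]; ring
  _ = (((m + 1) / 2 : ℕ) : ZMod m) * (2 * b) := by rw [h]
  _ = 1 * b := by rw [← h1]; ring
  _ = b := one_mul b

lemma cast_inj_of_lt {m a b : ℕ} [NeZero m] (ha : a < m) (hb : b < m)
    (h : (a : ZMod m) = (b : ZMod m)) : a = b := by
  have := congrArg ZMod.val h
  rwa [ZMod.val_cast_of_lt ha, ZMod.val_cast_of_lt hb] at this

def rrF (n k : ℕ) (h2 : 2 ≤ n) (hk : k ≤ n - 1) (r : Fin k) (x : Fin n) : Fin n :=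
  haveI : NeZero (n - 1) := ⟨by omega⟩
  if x.val = n - 1 then ⟨r.val, by have := r.isLt; omega⟩
  else if x.val = r.val then ⟨n - 1, by omega⟩
  else ⟨(2 * (r.val : ZMod (n - 1)) - (x.val : ZMod (n - 1))).val, by
    have := ZMod.val_lt (2 * (r.val : ZMod (n - 1)) - (x.val : ZMod (n - 1))); omega⟩

lemma rrF_eq_last {n k : ℕ} (h2 : 2 ≤ n) (hk : k ≤ n - 1) (r : Fin k) (x : Fin n)
    (h1 : x.val = n - 1) : rrF n k h2 hk r x = ⟨r.val, by have := r.isLt; omega⟩ := by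
  simp only [rrF]; rw [if_pos h1]

lemma rrF_eq_mid {n k : ℕ} (h2 : 2 ≤ n) (hk : k ≤ n - 1) (r : Fin k) (x : Fin n)
    (h1 : x.val ≠ n - 1) (hm : x.val = r.val) :
    rrF n k h2 hk r x = ⟨n - 1, by omega⟩ := by
  simp only [rrF]; rw [if_neg h1, if_pos hm]

lemma rrF_eq_arith {n k : ℕ} (h2 : 2 ≤ n) (hk : k ≤ n - 1) (r : Fin k) (x : Fin n)
    (h1 : x.val ≠ n - 1) (hm : x.val ≠ r.val) :
    rrF n k h2 hk r x = ⟨(haveI : NeZero (n - 1) := ⟨by omega⟩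
      (2 * (r.val : ZMod (n - 1)) - (x.val : ZMod (n - 1))).val), by
      haveI : NeZero (n - 1) := ⟨by omega⟩
      have := ZMod.val_lt (2 * (r.val : ZMod (n - 1)) - (x.val : ZMod (n - 1))); omega⟩ := by
  simp only [rrF]; rw [if_neg h1, if_neg hm]

lemma rrF_invol {n k : ℕ} (h2 : 2 ≤ n) (hk : k ≤ n - 1) (r : Fin k) (x : Fin n) :
    rrF n k h2 hk r (rrF n k h2 hk r x) = x := by
  haveI : NeZero (n - 1) := ⟨by omega⟩
  have hr := r.isLt
  have hx := x.isLt
  by_cases h1 : x.val = n - 1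
  · rw [rrF_eq_last h2 hk r x h1,
      rrF_eq_mid h2 hk r _ (by simp; omega) (by simp)]
    exact Fin.ext h1.symm
  · by_cases hm : x.val = r.val
    · rw [rrF_eq_mid h2 hk r x h1 hm, rrF_eq_last h2 hk r _ (by simp)]
      exact Fin.ext hm.symm
    · have hxlt : x.val < n - 1 := by omega
      rw [rrF_eq_arith h2 hk r x h1 hm]
      set y := 2 * (r.val : ZMod (n - 1)) - (x.val : ZMod (n - 1)) with hy
      have hyv : ((y.val : ℕ) : ZMod (n - 1)) = y := by
        rw [ZMod.natCast_val, ZMod.cast_id]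
      have hyne : ((⟨y.val, by have := ZMod.val_lt y; omega⟩ : Fin n)).val ≠ n - 1 := by
        simp only; have := ZMod.val_lt y; omega
      have hynr : ((⟨y.val, by have := ZMod.val_lt y; omega⟩ : Fin n)).val ≠ r.val := by
        simp only
        intro hc
        have hrz : y = (r.val : ZMod (n - 1)) := by rw [← hyv, hc]
        have hxr : (x.val : ZMod (n - 1)) = (r.val : ZMod (n - 1)) := by
          rw [hy] at hrz; linear_combination -hrz
        exact hm (cast_inj_of_lt hxlt (by omega) hxr)
      rw [rrF_eq_arith h2 hk r _ hyne hynr]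
      apply Fin.ext
      simp only
      have : 2 * (r.val : ZMod (n - 1)) - ((y.val : ℕ) : ZMod (n - 1))
          = (x.val : ZMod (n - 1)) := by rw [hyv, hy]; ring
      rw [this, ZMod.val_cast_of_lt hxlt]

lemma rrF_ne {n k : ℕ} (hn : Even n) (h2 : 2 ≤ n) (hk : k ≤ n - 1) (r : Fin k) (x : Fin n) :
    rrF n k h2 hk r x ≠ x := by
  haveI : NeZero (n - 1) := ⟨by omega⟩
  have hr := r.isLt
  have hx := x.isLt
  have hodd : Odd (n - 1) := Nat.Even.sub_odd (by omega) hn odd_one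
  intro hEq
  by_cases h1 : x.val = n - 1
  · rw [rrF_eq_last h2 hk r x h1] at hEq
    have := congrArg Fin.val hEq
    simp only at this
    omega
  · by_cases hm : x.val = r.val
    · rw [rrF_eq_mid h2 hk r x h1 hm] at hEq
      have := congrArg Fin.val hEq
      simp only at this
      omega
    · have hxlt : x.val < n - 1 := by omega
      rw [rrF_eq_arith h2 hk r x h1 hm] at hEq
      have hv := congrArg Fin.val hEq
      simp only at hv
      have : 2 * (r.val : ZMod (n - 1)) - (x.val : ZMod (n - 1)) = (x.val : ZMod (n - 1)) := by
        have := congrArg (Nat.cast : ℕ → ZMod (n - 1)) hv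
        rwa [ZMod.natCast_val, ZMod.cast_id] at this
      have h2x : 2 * (x.val : ZMod (n - 1)) = 2 * (r.val : ZMod (n - 1)) := by
        linear_combination -this
      exact hm (cast_inj_of_lt hxlt (by omega) (two_mul_cancel hodd h2x))

lemma rrF_inj {n k : ℕ} (hn : Even n) (h2 : 2 ≤ n) (hk : k ≤ n - 1) {r r' : Fin k}
    (hrr : r ≠ r') (x : Fin n) : rrF n k h2 hk r x ≠ rrF n k h2 hk r' x := by
  haveI : NeZero (n - 1) := ⟨by omega⟩
  have hr := r.isLt
  have hr' := r'.isLt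
  have hx := x.isLt
  have hodd : Odd (n - 1) := Nat.Even.sub_odd (by omega) hn odd_one
  have hvne : r.val ≠ r'.val := fun h => hrr (Fin.ext h)
  intro hEq
  by_cases h1 : x.val = n - 1
  · rw [rrF_eq_last h2 hk r x h1, rrF_eq_last h2 hk r' x h1] at hEq
    simp only [Fin.mk.injEq] at hEq
    exact hvne hEq
  · by_cases hm : x.val = r.val
    · have hm' : x.val ≠ r'.val := by omega
      rw [rrF_eq_mid h2 hk r x h1 hm, rrF_eq_arith h2 hk r' x h1 hm'] at hEq
      simp only [Fin.mk.injEq] at hEq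
      have := ZMod.val_lt (2 * (r'.val : ZMod (n - 1)) - (x.val : ZMod (n - 1)))
      omega
    · by_cases hm' : x.val = r'.val
      · rw [rrF_eq_mid h2 hk r' x h1 hm', rrF_eq_arith h2 hk r x h1 hm] at hEq
        simp only [Fin.mk.injEq] at hEq
        have := ZMod.val_lt (2 * (r.val : ZMod (n - 1)) - (x.val : ZMod (n - 1)))
        omega
      · rw [rrF_eq_arith h2 hk r x h1 hm, rrF_eq_arith h2 hk r' x h1 hm'] at hEq
        simp only [Fin.mk.injEq] at hEq
        have heq : 2 * (r.val : ZMod (n - 1)) - (x.val : ZMod (n - 1))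
            = 2 * (r'.val : ZMod (n - 1)) - (x.val : ZMod (n - 1)) :=
          ZMod.val_injective _ hEq
        have h2x : 2 * (r.val : ZMod (n - 1)) = 2 * (r'.val : ZMod (n - 1)) := by
          linear_combination heq
        exact hvne (cast_inj_of_lt (by omega) (by omega) (two_mul_cancel hodd h2x))

def rrG (n k : ℕ) (hn : Even n) (h2 : 2 ≤ n) (hk : k ≤ n - 1) : SimpleGraph (Fin n) where
  Adj x y := ∃ r : Fin k, y = rrF n k h2 hk r x
  symm := by
    constructor
    rintro x y ⟨r, hr⟩
    exact ⟨r, by rw [hr, rrF_invol]⟩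
  loopless := by
    constructor
    rintro x ⟨r, hr⟩
    exact rrF_ne hn h2 hk r x hr.symm

lemma rrG_adj {n k : ℕ} (hn : Even n) (h2 : 2 ≤ n) (hk : k ≤ n - 1) (x y : Fin n) :
    (rrG n k hn h2 hk).Adj x y ↔ ∃ r : Fin k, y = rrF n k h2 hk r x := Iff.rfl

theorem stmt16 (n k : ℕ) (hn : Even n) (h2 : 2 ≤ n) (hk : k ≤ n - 1) :
    IsLeast { m | ∃ G : SimpleGraph (Fin n), G.mp = k ∧ G.edgeSet.ncard = m }
      (n * k / 2) := by
  classical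
  constructor
  · -- membership
    set G := rrG n k hn h2 hk with hG
    have hnb : ∀ v : Fin n,
        G.neighborFinset v = Finset.univ.image (fun r => rrF n k h2 hk r v) := by
      intro v
      ext w
      simp only [mem_neighborFinset, Finset.mem_image, Finset.mem_univ, true_and]
      rw [hG, rrG_adj]
      exact ⟨fun ⟨r, hr⟩ => ⟨r, hr.symm⟩, fun ⟨r, hr⟩ => ⟨r, hr.symm⟩⟩
    have hdeg : ∀ v, G.degree v = k := by
      intro v
      have hinj : Function.Injective (fun r => rrF n k h2 hk r v) := by
        intro r r' h
        by_contra hne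
        exact rrF_inj hn h2 hk hne v h
      rw [← card_neighborFinset_eq_degree, hnb v,
        Finset.card_image_of_injective _ hinj, Finset.card_univ, Fintype.card_fin]
    -- edge count
    have hsum := G.sum_degrees_eq_twice_card_edges
    have hnk : ∑ v, G.degree v = n * k := by
      rw [Finset.sum_congr rfl (fun v _ => hdeg v)]
      simp [mul_comm]
    have hEcard : G.edgeFinset.card = n * k / 2 := by
      rw [← hnk, hsum, Nat.mul_div_cancel_left _ (by norm_num)]
    have hE : G.edgeSet.ncard = n * k / 2 := by
      rw [← coe_edgeFinset, Set.ncard_coe_finset, hEcard]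
    -- mp = k
    have hkmem : k ∈ { j | ∃ F : Finset (Sym2 (Fin n)), ↑F ⊆ G.edgeSet ∧ F.card = j ∧
        ¬ (G.deleteEdges ↑F).HasGoodMatching } := by
      refine ⟨G.incidenceFinset ⟨0, by omega⟩, ?_, ?_, ?_⟩
      · intro e he
        simp only [Finset.mem_coe, mem_incidenceFinset] at he
        exact he.1
      · rw [G.card_incidenceFinset_eq_degree, hdeg]
      · refine isolated_no_good hn h2 _ ⟨0, by omega⟩ ?_
        intro w hw
        rw [deleteEdges_adj] at hw
        refine hw.2 ?_
        simp only [Finset.mem_coe, mem_incidenceFinset]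
        exact ⟨hw.1, Sym2.mem_mk_left _ _⟩
    have hlow : ∀ j ∈ { j | ∃ F : Finset (Sym2 (Fin n)), ↑F ⊆ G.edgeSet ∧ F.card = j ∧
        ¬ (G.deleteEdges ↑F).HasGoodMatching }, k ≤ j := by
      rintro j ⟨F, hFE, hFc, hbad⟩
      by_contra hjk
      push_neg at hjk
      have hex : ∀ e ∈ F, ∃ (r : Fin k) (x : Fin n), e = s(x, rrF n k h2 hk r x) := by
        intro e he
        have heE : e ∈ G.edgeSet := hFE he
        clear he
        induction e using Sym2.ind with
        | _ a b =>
          rw [mem_edgeSet, hG, rrG_adj] at heE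
          obtain ⟨r, hr⟩ := heE
          exact ⟨r, a, by rw [hr]⟩
      choose c₁ c₂ hc using hex
      have huniq : ∀ (r r' : Fin k) (x x' : Fin n),
          s(x, rrF n k h2 hk r x) = s(x', rrF n k h2 hk r' x') → r = r' := by
        intro r r' x x' h
        rw [Sym2.eq_iff] at h
        rcases h with ⟨h1, h2'⟩ | ⟨h1, h2'⟩
        · subst h1
          by_contra hne
          exact rrF_inj hn h2 hk hne x h2'
        · by_contra hne
          have hx' : rrF n k h2 hk r' x = x' := by rw [h1, rrF_invol]
          exact rrF_inj hn h2 hk hne x (h2'.trans hx'.symm)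
      have himg : ∃ r : Fin k, ∀ e (he : e ∈ F), c₁ e he ≠ r := by
        by_contra hc'
        push_neg at hc'
        have hsurj : Function.Surjective (fun p : {e // e ∈ F} => c₁ p.1 p.2) := by
          intro r
          obtain ⟨e, he, hee⟩ := hc' r
          exact ⟨⟨e, he⟩, hee⟩
        have hcard := Fintype.card_le_of_surjective _ hsurj
        rw [Fintype.card_coe, hFc, Fintype.card_fin] at hcard
        omega
      obtain ⟨r, hrav⟩ := himg
      apply hbad
      left
      have key : ∀ a b : Fin n, b = rrF n k h2 hk r a → (G.deleteEdges ↑F).Adj a b := by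
        intro a b hb
        rw [deleteEdges_adj]
        refine ⟨⟨r, hb⟩, ?_⟩
        intro hmem
        rw [Finset.mem_coe] at hmem
        have heq : s(a, b) = s(c₂ _ hmem, rrF n k h2 hk (c₁ _ hmem) (c₂ _ hmem)) := hc _ hmem
        have : c₁ _ hmem = r := huniq _ r _ a (heq.symm.trans (by rw [hb]))
        exact hrav _ hmem this
      refine ⟨⟨Set.univ, fun x y => y = rrF n k h2 hk r x ∨ x = rrF n k h2 hk r y,
        ?_, fun _ => Set.mem_univ _, ?_⟩, ?_, fun v => Set.mem_univ v⟩
      · rintro x y (hb | hb)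
        · exact key x y hb
        · exact (key y x hb).symm
      · constructor
        rintro x y (hb | hb)
        · exact Or.inr hb
        · exact Or.inl hb
      · intro v _
        refine ⟨rrF n k h2 hk r v, Or.inl rfl, ?_⟩
        rintro w (hw | hw)
        · exact hw
        · rw [hw, rrF_invol]
    refine ⟨G, le_antisymm (Nat.sInf_le hkmem) (le_csInf ⟨k, hkmem⟩ hlow), hE⟩
  · rintro m ⟨G, hmp, hEm⟩
    rw [← hEm]
    exact lower_bound hn h2 G hmp
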